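/- In a sparse graph G, every edge is contained in a unique maximal rigid block (rigid component), and any two distinct rigid components of G intersect in at most one vertex. -/

import Mathlib

open SimpleGraph

variable {V : Type*}

/-- Number of type-1 vertices in a vertex set. -/
noncomputable def n1 (t1 : V → Prop) (S : Set V) : ℕ := {v ∈ S | t1 v}.ncard

/-- Number of type-2 vertices in a vertex set. -/
noncomputable def n2 (t1 : V → Prop) (S : Set V) : ℕ := {v ∈ S | ¬ t1 v}.ncard

/-- Number of edges of `G` with both endpoints in `S`. -/
noncomputable def edgesIn (G : SimpleGraph V) (S : Set V) : ℕ :=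
  {e ∈ G.edgeSet | ∀ v ∈ e, v ∈ S}.ncard

/-- Sparsity: every subgraph on `n' ≥ 2` vertices has at most
`n₁' + 2 n₂' + min 0 (n₁' - 3)` edges. -/
def Sparse (G : SimpleGraph V) (t1 : V → Prop) : Prop :=
  ∀ S : Set V, 2 ≤ S.ncard →
    (edgesIn G S : ℤ) ≤ (n1 t1 S : ℤ) + 2 * n2 t1 S + min 0 ((n1 t1 S : ℤ) - 3)

/-- Minimal rigidity: either one vertex, or sparse with exactly
`n₁ + 2 n₂ + min 0 (n₁ - 3)` edges. -/
def MinRigid (G : SimpleGraph V) (t1 : V → Prop) : Prop :=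
  Nat.card V = 1 ∨
    (Sparse G t1 ∧
      (G.edgeSet.ncard : ℤ) = (n1 t1 Set.univ : ℤ) + 2 * n2 t1 Set.univ +
        min 0 ((n1 t1 Set.univ : ℤ) - 3))

/-- Rigidity: contains a spanning minimally rigid subgraph. -/
def Rigid (G : SimpleGraph V) (t1 : V → Prop) : Prop :=
  ∃ H : SimpleGraph V, H ≤ G ∧ MinRigid H t1

/-- A rigid block: a vertex-induced rigid subgraph, identified with its vertex set. -/
def RigidBlock (G : SimpleGraph V) (t1 : V → Prop) (S : Set V) : Prop :=
  Rigid (G.induce S) (fun v => t1 ↑v)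

/-- A rigid component: an inclusion-wise maximal rigid block. -/
def RigidComponent (G : SimpleGraph V) (t1 : V → Prop) (S : Set V) : Prop :=
  RigidBlock G t1 S ∧ ∀ T : Set V, RigidBlock G t1 T → S ⊆ T → S = T


set_option linter.unusedSectionVars false
noncomputable def fB (t1 : V → Prop) (S : Set V) : ℤ :=
  (n1 t1 S : ℤ) + 2 * n2 t1 S + min 0 ((n1 t1 S : ℤ) - 3)

section lemmas
variable [Fintype V]

lemma n1_image (t1 : V → Prop) (U : Set V) (S' : Set ↑U) :
    n1 (fun v : ↑U => t1 ↑v) S' = n1 t1 (Subtype.val '' S') := by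
  unfold n1
  rw [← Set.ncard_image_of_injective {v ∈ S' | t1 ↑v} Subtype.val_injective]
  congr 1
  ext v
  constructor
  · rintro ⟨x, ⟨hx, ht⟩, rfl⟩; exact ⟨⟨x, hx, rfl⟩, ht⟩
  · rintro ⟨⟨x, hx, rfl⟩, ht⟩; exact ⟨x, ⟨hx, ht⟩, rfl⟩

lemma n2_image (t1 : V → Prop) (U : Set V) (S' : Set ↑U) :
    n2 (fun v : ↑U => t1 ↑v) S' = n2 t1 (Subtype.val '' S') := by
  unfold n2
  rw [← Set.ncard_image_of_injective {v ∈ S' | ¬ t1 ↑v} Subtype.val_injective]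
  congr 1
  ext v
  constructor
  · rintro ⟨x, ⟨hx, ht⟩, rfl⟩; exact ⟨⟨x, hx, rfl⟩, ht⟩
  · rintro ⟨⟨x, hx, rfl⟩, ht⟩; exact ⟨x, ⟨hx, ht⟩, rfl⟩

lemma edgesIn_induce (K : SimpleGraph V) (U : Set V) (S' : Set ↑U) :
    edgesIn (K.induce U) S' = edgesIn K (Subtype.val '' S') := by
  unfold edgesIn
  rw [← Set.ncard_image_of_injective _ (Sym2.map.injective (Subtype.val_injective))]
  congr 1
  ext e
  constructor
  · rintro ⟨e', ⟨he', hmem⟩, rfl⟩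
    induction e' using Sym2.ind with
    | _ a b =>
      refine ⟨he', ?_⟩
      intro v hv
      rw [Sym2.map_pair_eq, Sym2.mem_iff] at hv
      rcases hv with rfl | rfl
      · exact ⟨a, hmem a (Sym2.mem_mk_left a b), rfl⟩
      · exact ⟨b, hmem b (Sym2.mem_mk_right a b), rfl⟩
  · intro ⟨he, hmem⟩
    induction e using Sym2.ind with
    | _ x y =>
      obtain ⟨a, ha, rfl⟩ := hmem x (Sym2.mem_mk_left x y)
      obtain ⟨b, hb, rfl⟩ := hmem y (Sym2.mem_mk_right _ _)
      refine ⟨s(a, b), ⟨?_, ?_⟩, ?_⟩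
      · rw [SimpleGraph.mem_edgeSet] at he ⊢
        exact he
      · intro v hv
        rw [Sym2.mem_iff] at hv
        rcases hv with rfl | rfl
        · exact ha
        · exact hb
      · rw [Sym2.map_pair_eq]
end lemmas

lemma edgeSet_map' {W : Type*} (f : V ↪ W) (H : SimpleGraph V) :
    (H.map f).edgeSet = Sym2.map f '' H.edgeSet := by
  ext e
  induction e using Sym2.ind with
  | _ x y =>
    rw [SimpleGraph.mem_edgeSet, SimpleGraph.map_adj]
    constructor
    · rintro ⟨a, b, hab, rfl, rfl⟩
      exact ⟨s(a, b), hab, Sym2.map_pair_eq f a b⟩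
    · rintro ⟨e', he', heq⟩
      induction e' using Sym2.ind with
      | _ a b =>
        rw [Sym2.map_pair_eq, Sym2.eq_iff] at heq
        rcases heq with ⟨rfl, rfl⟩ | ⟨rfl, rfl⟩
        · exact ⟨a, b, he', rfl, rfl⟩
        · rw [SimpleGraph.mem_edgeSet] at he'
          exact ⟨b, a, he'.symm, rfl, rfl⟩

lemma edgesIn_of_within {K : SimpleGraph V} {S : Set V}
    (h : ∀ e ∈ K.edgeSet, ∀ v ∈ e, v ∈ S) : edgesIn K S = K.edgeSet.ncard := by
  unfold edgesIn
  congr 1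
  ext e
  exact ⟨fun he => he.1, fun he => ⟨he, h e he⟩⟩

section more
variable [Fintype V]

lemma edgesIn_mono {K K' : SimpleGraph V} (h : K ≤ K') (S : Set V) :
    edgesIn K S ≤ edgesIn K' S :=
  Set.ncard_le_ncard (fun e he => ⟨SimpleGraph.edgeSet_mono h he.1, he.2⟩) (Set.toFinite _)

lemma n1_add_n2 (t1 : V → Prop) (S : Set V) : n1 t1 S + n2 t1 S = S.ncard := by
  unfold n1 n2
  rw [← Set.ncard_union_eq (by
    simp only [Set.disjoint_left, Set.mem_setOf_eq]
    rintro v ⟨_, h1⟩ ⟨_, h2⟩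
    exact h2 h1) (Set.toFinite _) (Set.toFinite _)]
  congr 1
  ext v
  by_cases h : t1 v <;> simp [h]

lemma n1_modular (t1 : V → Prop) (S T : Set V) :
    n1 t1 (S ∪ T) + n1 t1 (S ∩ T) = n1 t1 S + n1 t1 T := by
  unfold n1
  have h1 : {v ∈ S ∪ T | t1 v} = {v ∈ S | t1 v} ∪ {v ∈ T | t1 v} := by
    ext v; by_cases h : t1 v <;> simp [h, Set.mem_union]
  have h2 : {v ∈ S ∩ T | t1 v} = {v ∈ S | t1 v} ∩ {v ∈ T | t1 v} := by
    ext v; by_cases h : t1 v <;> simp [h, Set.mem_inter_iff]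
  rw [h1, h2]
  exact Set.ncard_union_add_ncard_inter _ _ (Set.toFinite _) (Set.toFinite _)

lemma n2_modular (t1 : V → Prop) (S T : Set V) :
    n2 t1 (S ∪ T) + n2 t1 (S ∩ T) = n2 t1 S + n2 t1 T := by
  unfold n2
  have h1 : {v ∈ S ∪ T | ¬ t1 v} = {v ∈ S | ¬ t1 v} ∪ {v ∈ T | ¬ t1 v} := by
    ext v; by_cases h : t1 v <;> simp [h, Set.mem_union]
  have h2 : {v ∈ S ∩ T | ¬ t1 v} = {v ∈ S | ¬ t1 v} ∩ {v ∈ T | ¬ t1 v} := by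
    ext v; by_cases h : t1 v <;> simp [h, Set.mem_inter_iff]
  rw [h1, h2]
  exact Set.ncard_union_add_ncard_inter _ _ (Set.toFinite _) (Set.toFinite _)

lemma n1_mono (t1 : V → Prop) {S T : Set V} (h : S ⊆ T) : n1 t1 S ≤ n1 t1 T :=
  Set.ncard_le_ncard (fun v hv => ⟨h hv.1, hv.2⟩) (Set.toFinite _)

lemma rigidBlock_iff (G : SimpleGraph V) (t1 : V → Prop) (S : Set V) (hS : 2 ≤ S.ncard)
    (hG : Sparse G t1) :
    RigidBlock G t1 S ↔ ∃ K : SimpleGraph V, K ≤ G ∧ (∀ e ∈ K.edgeSet, ∀ v ∈ e, v ∈ S)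
      ∧ (K.edgeSet.ncard : ℤ) = fB t1 S := by
  constructor
  · rintro ⟨H, hle, hmr⟩
    have hcard : Nat.card ↑S = S.ncard := Nat.card_coe_set_eq S
    rcases hmr with h1 | ⟨_, hcount⟩
    · omega
    refine ⟨H.map (Function.Embedding.subtype _), (SimpleGraph.map_le_iff_le_comap _ _ _).mpr hle,
      ?_, ?_⟩
    · intro e he
      rw [edgeSet_map'] at he
      obtain ⟨e', he', rfl⟩ := he
      induction e' using Sym2.ind with
      | _ a b =>
        intro v hv
        rw [Sym2.map_pair_eq, Sym2.mem_iff] at hv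
        rcases hv with rfl | rfl
        · exact a.2
        · exact b.2
    · rw [edgeSet_map']
      simp only [Function.Embedding.coe_subtype]
      rw [Set.ncard_image_of_injective _ (Sym2.map.injective Subtype.val_injective)]
      rw [hcount]
      unfold fB
      rw [n1_image t1 S Set.univ, n2_image t1 S Set.univ, Subtype.coe_image_univ]
  · rintro ⟨K, hle, hin, hcount⟩
    refine ⟨K.induce S, SimpleGraph.comap_monotone _ hle, Or.inr ⟨?_, ?_⟩⟩
    · intro S' hS'
      have himg : (Subtype.val '' S').ncard = S'.ncard :=
        Set.ncard_image_of_injective _ Subtype.val_injective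
      have h2 : 2 ≤ (Subtype.val '' S').ncard := by omega
      have := hG (Subtype.val '' S') h2
      rw [edgesIn_induce, n1_image, n2_image]
      calc (edgesIn K (Subtype.val '' S') : ℤ) ≤ edgesIn G (Subtype.val '' S') := by
            exact_mod_cast edgesIn_mono hle _
        _ ≤ _ := this
    · have h1 : (K.induce S).edgeSet.ncard = edgesIn (K.induce S) Set.univ :=
        (edgesIn_of_within (by simp)).symm
      rw [h1, edgesIn_induce, Subtype.coe_image_univ, edgesIn_of_within hin, hcount]
      unfold fB
      rw [n1_image t1 S Set.univ, n2_image t1 S Set.univ, Subtype.coe_image_univ]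

lemma rigidBlock_union (G : SimpleGraph V) (t1 : V → Prop) (hG : Sparse G t1) {S T : Set V}
    (hS : RigidBlock G t1 S) (hT : RigidBlock G t1 T) (h2 : 2 ≤ (S ∩ T).ncard) :
    RigidBlock G t1 (S ∪ T) := by
  have hS2 : 2 ≤ S.ncard :=
    le_trans h2 (Set.ncard_le_ncard Set.inter_subset_left (Set.toFinite _))
  have hT2 : 2 ≤ T.ncard :=
    le_trans h2 (Set.ncard_le_ncard Set.inter_subset_right (Set.toFinite _))
  have hU2 : 2 ≤ (S ∪ T).ncard :=
    le_trans hS2 (Set.ncard_le_ncard Set.subset_union_left (Set.toFinite _))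
  obtain ⟨KS, hKSle, hKSin, hKScount⟩ := (rigidBlock_iff G t1 S hS2 hG).mp hS
  obtain ⟨KT, hKTle, hKTin, hKTcount⟩ := (rigidBlock_iff G t1 T hT2 hG).mp hT
  rw [rigidBlock_iff G t1 (S ∪ T) hU2 hG]
  refine ⟨KS ⊔ KT, sup_le hKSle hKTle, ?_, ?_⟩
  · intro e he v hv
    rw [SimpleGraph.edgeSet_sup] at he
    rcases he with he | he
    · exact Or.inl (hKSin e he v hv)
    · exact Or.inr (hKTin e he v hv)
  · have hie : (KS ⊔ KT).edgeSet = KS.edgeSet ∪ KT.edgeSet := SimpleGraph.edgeSet_sup _ _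
    have hmod : (KS.edgeSet ∪ KT.edgeSet).ncard + (KS.edgeSet ∩ KT.edgeSet).ncard
        = KS.edgeSet.ncard + KT.edgeSet.ncard :=
      Set.ncard_union_add_ncard_inter _ _ (Set.toFinite _) (Set.toFinite _)
    have hintle : (KS.edgeSet ∩ KT.edgeSet).ncard ≤ edgesIn G (S ∩ T) := by
      apply Set.ncard_le_ncard _ (Set.toFinite _)
      rintro e ⟨heS, heT⟩
      exact ⟨SimpleGraph.edgeSet_mono hKSle heS,
        fun v hv => ⟨hKSin e heS v hv, hKTin e heT v hv⟩⟩
    have hGint : (edgesIn G (S ∩ T) : ℤ) ≤ fB t1 (S ∩ T) := hG _ h2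
    have hup : ((KS ⊔ KT).edgeSet.ncard : ℤ) ≤ fB t1 (S ∪ T) := by
      have hw : ∀ e ∈ (KS ⊔ KT).edgeSet, ∀ v ∈ e, v ∈ S ∪ T := by
        intro e he v hv
        rw [SimpleGraph.edgeSet_sup] at he
        rcases he with he | he
        · exact Or.inl (hKSin e he v hv)
        · exact Or.inr (hKTin e he v hv)
      rw [← edgesIn_of_within hw]
      calc (edgesIn (KS ⊔ KT) (S ∪ T) : ℤ) ≤ edgesIn G (S ∪ T) := by
            exact_mod_cast edgesIn_mono (sup_le hKSle hKTle) _
        _ ≤ _ := hG _ hU2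
    have hn1 := n1_modular t1 S T
    have hn2 := n2_modular t1 S T
    have hm1 : n1 t1 (S ∩ T) ≤ n1 t1 S := n1_mono t1 Set.inter_subset_left
    have hm2 : n1 t1 (S ∩ T) ≤ n1 t1 T := n1_mono t1 Set.inter_subset_right
    rw [hie] at hup
    unfold fB at *
    rw [hie]
    omega
end more

/-- In a sparse graph, every edge is contained in a unique rigid component, and
any two distinct rigid components intersect in at most one vertex. -/
theorem stmt10 {V : Type*} [Fintype V] (G : SimpleGraph V) (t1 : V → Prop)
    (hG : Sparse G t1) :
    (∀ e ∈ G.edgeSet, ∃! S : Set V,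
      RigidComponent G t1 S ∧ ∀ v ∈ e, v ∈ S) ∧
    (∀ S T : Set V, RigidComponent G t1 S → RigidComponent G t1 T → S ≠ T →
      (S ∩ T).ncard ≤ 1) := by
  have edgeBlock : ∀ u v : V, G.Adj u v → RigidBlock G t1 {u, v} := by
    intro u v huv
    have hne : u ≠ v := huv.ne
    have hcard : ({u, v} : Set V).ncard = 2 := Set.ncard_pair hne
    rw [rigidBlock_iff G t1 {u, v} (by omega) hG]
    have hes : (SimpleGraph.fromEdgeSet {s(u, v)}).edgeSet = {s(u, v)} := by
      rw [SimpleGraph.edgeSet_fromEdgeSet]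
      ext e
      simp only [Set.mem_diff, Set.mem_singleton_iff, Set.mem_setOf_eq]
      constructor
      · exact fun h => h.1
      · rintro rfl
        exact ⟨rfl, by simp [Sym2.mk_isDiag_iff, hne]⟩
    refine ⟨SimpleGraph.fromEdgeSet {s(u, v)}, ?_, ?_, ?_⟩
    · intro x y hxy
      rw [SimpleGraph.fromEdgeSet_adj, Set.mem_singleton_iff, Sym2.eq_iff] at hxy
      rcases hxy.1 with ⟨rfl, rfl⟩ | ⟨rfl, rfl⟩
      · exact huv
      · exact huv.symm
    · intro e he w hw
      rw [hes, Set.mem_singleton_iff] at he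
      subst he
      rw [Sym2.mem_iff] at hw
      rcases hw with rfl | rfl
      · exact Or.inl rfl
      · exact Or.inr (Set.mem_singleton _)
    · have h12 := n1_add_n2 t1 {u, v}
      have hlen : n1 t1 {u, v} ≤ ({u, v} : Set V).ncard := by
        unfold n1
        exact Set.ncard_le_ncard (fun x hx => hx.1) (Set.toFinite _)
      rw [hes, Set.ncard_singleton]
      unfold fB
      omega
  have comp_eq : ∀ S T : Set V, RigidComponent G t1 S → RigidComponent G t1 T →
      2 ≤ (S ∩ T).ncard → S = T := by
    intro S T hS hT h2
    have hu := rigidBlock_union G t1 hG hS.1 hT.1 h2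
    have h1 := hS.2 _ hu Set.subset_union_left
    have h2' := hT.2 _ hu Set.subset_union_right
    exact h1.trans h2'.symm
  constructor
  · intro e he
    induction e using Sym2.ind with
    | _ u v =>
      rw [SimpleGraph.mem_edgeSet] at he
      have hblock := edgeBlock u v he
      have hne : ({A : Set V | RigidBlock G t1 A ∧ u ∈ A ∧ v ∈ A}).Nonempty :=
        ⟨{u, v}, hblock, Or.inl rfl, Or.inr rfl⟩
      obtain ⟨S, hSmem, hSmax⟩ :=
        Set.Finite.exists_maximalFor id _ (Set.toFinite _) hne
      have hScomp : RigidComponent G t1 S :=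
        ⟨hSmem.1, fun T hT hsub => Set.Subset.antisymm hsub (hSmax ⟨hT, hsub hSmem.2.1, hsub hSmem.2.2⟩ hsub)⟩
      refine ⟨S, ⟨hScomp, ?_⟩, ?_⟩
      · intro w hw
        rw [Sym2.mem_iff] at hw
        rcases hw with rfl | rfl
        · exact hSmem.2.1
        · exact hSmem.2.2
      · rintro T ⟨hTcomp, hTmem⟩
        have hsub : ({u, v} : Set V) ⊆ T ∩ S := by
          rintro w (rfl | rfl)
          · exact ⟨hTmem w (Sym2.mem_mk_left _ _), hSmem.2.1⟩
          · exact ⟨hTmem w (Sym2.mem_mk_right _ _), hSmem.2.2⟩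
        have h2 : 2 ≤ (T ∩ S).ncard := by
          rw [← Set.ncard_pair he.ne]
          exact Set.ncard_le_ncard hsub (Set.toFinite _)
        exact comp_eq T S hTcomp hScomp h2
  · intro S T hS hT hST
    by_contra h
    push_neg at h
    exact hST (comp_eq S T hS hT (by omega))
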